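/- arXiv:1511.01966 — 7 statements merged into one kernel-verified Lean document; each statement's English description precedes it below -/
import Mathlib

section
/- For the partly quadratic penalty φ(x;a) with a > 0, the function s(x;a) := φ(x;a) - |x| is concave on ℝ. -/
theorem stmt_3 (a : ℝ) (ha : 0 < a)
    (φ s : ℝ → ℝ)
    (hφ : ∀ x, φ x = if |x| ≤ 1 / a then |x| - a / 2 * x ^ 2 else 1 / (2 * a))
    (hs : ∀ x, s x = φ x - |x|) :
    ConcaveOn ℝ Set.univ s := by
  have hainv : 0 < 1 / a := by positivity
  have h1a : a * (1 / a) = 1 := by field_simp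
  set H : ℝ → ℝ := fun x => if |x| ≤ 1 / a then a / 2 * x ^ 2 else |x| - 1 / (2 * a) with hH
  set d : ℝ → ℝ := fun x => max (-1) (min 1 (a * x)) with hd
  -- quadratic derivative
  have hq : ∀ x : ℝ, HasDerivAt (fun y : ℝ => a / 2 * y ^ 2) (a * x) x := by
    intro x
    have := (hasDerivAt_pow 2 x).const_mul (a / 2)
    refine this.congr_deriv ?_
    push_cast
    ring
  -- derivative of H
  have hder : ∀ x, HasDerivAt H (d x) x := by
    intro x
    rcases lt_trichotomy (|x|) (1 / a) with hx | hx | hx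
    · -- interior of quadratic region
      have hEq : (fun y => a / 2 * y ^ 2) =ᶠ[nhds x] H := by
        have hopen : IsOpen {y : ℝ | |y| < 1 / a} := isOpen_lt continuous_abs continuous_const
        filter_upwards [hopen.mem_nhds hx] with y hy
        simp only [hH]
        rw [if_pos hy.le]
      have habs : |a * x| < 1 := by
        rw [abs_mul, abs_of_pos ha]
        calc a * |x| < a * (1 / a) := mul_lt_mul_of_pos_left hx ha
        _ = 1 := h1a
      rw [abs_lt] at habs
      have hdx : d x = a * x := by
        simp [hd, min_eq_right habs.2.le, max_eq_right habs.1.le]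
      rw [hdx]
      exact (hq x).congr_of_eventuallyEq hEq.symm
    · -- boundary
      rcases (abs_eq hainv.le).mp hx with hx1 | hx1
      · -- x = 1/a
        have hdx : d x = 1 := by
          have h1 : a * x = 1 := by rw [hx1, h1a]
          simp [hd, h1]
        rw [hdx]
        have hleft : HasDerivWithinAt H 1 (Set.Iic x) x := by
          have h1 : HasDerivWithinAt (fun y : ℝ => a / 2 * y ^ 2) 1 (Set.Iic x) x := by
            have := (hq x).hasDerivWithinAt (s := Set.Iic x)
            have hval : a * x = 1 := by rw [hx1, h1a]
            rwa [hval] at this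
          refine h1.congr_of_eventuallyEq ?_ (by simp only [hH]; rw [if_pos hx.le])
          have hnb : ∀ᶠ y in nhds x, -(1/a) < y :=
            eventually_gt_nhds (by rw [hx1]; linarith)
          filter_upwards [eventually_nhdsWithin_of_eventually_nhds hnb,
            eventually_mem_nhdsWithin] with y h1y h2y
          rw [Set.mem_Iic, hx1] at h2y
          have hy : |y| ≤ 1 / a := abs_le.mpr ⟨h1y.le, h2y⟩
          simp only [hH]
          rw [if_pos hy]
        have hright : HasDerivWithinAt H 1 (Set.Ici x) x := by
          have h1 : HasDerivWithinAt (fun y : ℝ => y - 1 / (2 * a)) 1 (Set.Ici x) x := by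
            simpa using ((hasDerivAt_id x).sub_const (1 / (2 * a))).hasDerivWithinAt
          refine h1.congr_of_eventuallyEq ?_ ?_
          · filter_upwards [eventually_mem_nhdsWithin] with y h2y
            rw [Set.mem_Ici, hx1] at h2y
            have hy0 : 0 < y := lt_of_lt_of_le hainv h2y
            simp only [hH]
            by_cases h : |y| ≤ 1 / a
            · have hy1 : y = 1 / a := le_antisymm ((abs_le.mp h).2) h2y
              rw [if_pos h, hy1]
              field_simp
              ring
            · rw [if_neg h, abs_of_pos hy0]
          · simp only [hH]
            rw [if_pos hx.le, hx1]
            field_simp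
            ring
        have := hleft.union hright
        rwa [Set.Iic_union_Ici, hasDerivWithinAt_univ] at this
      · -- x = -1/a
        have hdx : d x = -1 := by
          have h1 : a * x = -1 := by rw [hx1, mul_neg, h1a]
          simp [hd, h1]
        rw [hdx]
        have hright : HasDerivWithinAt H (-1) (Set.Ici x) x := by
          have h1 : HasDerivWithinAt (fun y : ℝ => a / 2 * y ^ 2) (-1) (Set.Ici x) x := by
            have := (hq x).hasDerivWithinAt (s := Set.Ici x)
            have hval : a * x = -1 := by rw [hx1, mul_neg, h1a]
            rwa [hval] at this
          refine h1.congr_of_eventuallyEq ?_ (by simp only [hH]; rw [if_pos hx.le])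
          have hnb : ∀ᶠ y in nhds x, y < 1/a :=
            eventually_lt_nhds (by rw [hx1]; linarith)
          filter_upwards [eventually_nhdsWithin_of_eventually_nhds hnb,
            eventually_mem_nhdsWithin] with y h1y h2y
          rw [Set.mem_Ici, hx1] at h2y
          have hy : |y| ≤ 1 / a := abs_le.mpr ⟨h2y, h1y.le⟩
          simp only [hH]
          rw [if_pos hy]
        have hleft : HasDerivWithinAt H (-1) (Set.Iic x) x := by
          have h1 : HasDerivWithinAt (fun y : ℝ => -y - 1 / (2 * a)) (-1) (Set.Iic x) x := by
            simpa using (((hasDerivAt_id x).neg).sub_const (1 / (2 * a))).hasDerivWithinAt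
          refine h1.congr_of_eventuallyEq ?_ ?_
          · filter_upwards [eventually_mem_nhdsWithin] with y h2y
            rw [Set.mem_Iic, hx1] at h2y
            have hy0 : y < 0 := lt_of_le_of_lt h2y (by linarith)
            simp only [hH]
            by_cases h : |y| ≤ 1 / a
            · have hy1 : y = -(1 / a) := le_antisymm h2y (neg_le_of_abs_le h)
              rw [if_pos h, hy1]
              field_simp
              ring
            · rw [if_neg h, abs_of_neg hy0]
          · simp only [hH]
            rw [if_pos hx.le, hx1]
            field_simp
            ring
        have := hleft.union hright
        rwa [Set.Iic_union_Ici, hasDerivWithinAt_univ] at this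
    · -- outside
      rcases lt_abs.mp hx with hx1 | hx1
      · -- x > 1/a
        have hdx : d x = 1 := by
          have h1 : 1 ≤ a * x := by
            have h2 : a * (1 / a) < a * x := mul_lt_mul_of_pos_left hx1 ha
            rw [h1a] at h2; linarith
          simp [hd, min_eq_left h1]
        rw [hdx]
        have hEq : (fun y : ℝ => y - 1 / (2 * a)) =ᶠ[nhds x] H := by
          filter_upwards [eventually_gt_nhds hx1] with y hy
          have hy0 : 0 < y := lt_trans hainv hy
          have hny : ¬ |y| ≤ 1 / a := by rw [abs_of_pos hy0]; linarith
          simp only [hH]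
          rw [if_neg hny, abs_of_pos hy0]
        have h1 : HasDerivAt (fun y : ℝ => y - 1 / (2 * a)) 1 x := by
          simpa using (hasDerivAt_id x).sub_const (1 / (2 * a))
        exact h1.congr_of_eventuallyEq hEq.symm
      · -- x < -1/a
        have hxneg : x < -(1/a) := by linarith
        have hdx : d x = -1 := by
          have h1 : a * x ≤ -1 := by
            have h2 : a * x < a * (-(1/a)) := mul_lt_mul_of_pos_left hxneg ha
            rw [mul_neg, h1a] at h2; linarith
          have hm : min 1 (a * x) = a * x := min_eq_right (by linarith)
          simp [hd, hm, max_eq_left h1]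
        rw [hdx]
        have hEq : (fun y : ℝ => -y - 1 / (2 * a)) =ᶠ[nhds x] H := by
          filter_upwards [eventually_lt_nhds hxneg] with y hy
          have hy0 : y < 0 := lt_trans hy (by linarith)
          have hny : ¬ |y| ≤ 1 / a := by rw [abs_of_neg hy0]; linarith
          simp only [hH]
          rw [if_neg hny, abs_of_neg hy0]
        have h1 : HasDerivAt (fun y : ℝ => -y - 1 / (2 * a)) (-1) x := by
          simpa using ((hasDerivAt_id x).neg).sub_const (1 / (2 * a))
        exact h1.congr_of_eventuallyEq hEq.symm
  -- d is monotone
  have hmono : Monotone d := by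
    intro x y hxy
    exact max_le_max le_rfl (min_le_min le_rfl (by nlinarith))
  have hdiff : Differentiable ℝ H := fun x => (hder x).differentiableAt
  have hderiv : deriv H = d := funext fun x => (hder x).deriv
  have hconv : ConvexOn ℝ Set.univ H :=
    Monotone.convexOn_univ_of_deriv hdiff (hderiv ▸ hmono)
  have hsH : s = -H := by
    funext x
    rw [hs, hφ]
    simp only [Pi.neg_apply, hH]
    by_cases h : |x| ≤ 1 / a
    · rw [if_pos h, if_pos h]; ring
    · rw [if_neg h, if_neg h]; ring
  rw [hsH]
  exact hconv.neg
end

section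
/- Let λ > 0 and 0 < a < 1/λ, and let φ be the partly quadratic penalty. Then the function f(x) = (1/2)x² + λφ(x;a) is strictly convex on ℝ. -/
open Set

private lemma convexOn_abs' : ConvexOn ℝ (univ : Set ℝ) (fun x => |x|) := by
  have := convexOn_univ_norm (E := ℝ)
  exact this

private lemma convexOn_sq_comp {p : ℝ → ℝ} (hp : ConvexOn ℝ (univ : Set ℝ) p)
    (hp0 : ∀ x, 0 ≤ p x) : ConvexOn ℝ (univ : Set ℝ) (fun x => (p x) ^ 2) := by
  refine ⟨convex_univ, ?_⟩
  intro x _ y _ μ ν hμ hν hμν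
  have h1 := hp.2 (mem_univ x) (mem_univ y) hμ hν hμν
  simp only [smul_eq_mul] at *
  nlinarith [hp0 x, hp0 y, hp0 (μ * x + ν * y), sq_nonneg (p x - p y),
    mul_nonneg hμ hν, mul_nonneg (mul_nonneg hμ hν) (sq_nonneg (p x - p y))]

private lemma strictConvexOn_mul {c : ℝ} {s : Set ℝ} {f : ℝ → ℝ} (hc : 0 < c)
    (hf : StrictConvexOn ℝ s f) : StrictConvexOn ℝ s (fun x => c * f x) := by
  refine ⟨hf.1, ?_⟩
  intro x hx y hy hxy μ ν hμ hν hμν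
  have h1 := hf.2 hx hy hxy hμ hν hμν
  simp only [smul_eq_mul] at *
  nlinarith

theorem stmt_5 (a lam : ℝ) (ha : 0 < a) (hlam : 0 < lam) (h : a < 1 / lam)
    (φ f : ℝ → ℝ)
    (hφ : ∀ x, φ x = if |x| ≤ 1 / a then |x| - a / 2 * x ^ 2 else 1 / (2 * a))
    (hf : ∀ x, f x = 1 / 2 * x ^ 2 + lam * φ x) :
    StrictConvexOn ℝ Set.univ f := by
  have hla : lam * a < 1 := by
    have := (lt_div_iff₀ hlam).mp h
    linarith [this]
  set p : ℝ → ℝ := fun x => max (|x| - 1 / a) 0 with hp_def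
  have hp_conv : ConvexOn ℝ (univ : Set ℝ) p := by
    have h1 : ConvexOn ℝ (univ : Set ℝ) (fun x => |x| - 1 / a) := by
      have hh := convexOn_abs'.add (convexOn_const (-(1/a)) convex_univ)
      simp [sub_eq_add_neg] at hh ⊢
      exact hh
    have hh := h1.sup (convexOn_const 0 convex_univ)
    simp [hp_def] at hh ⊢
    exact hh
  have hp0 : ∀ x, 0 ≤ p x := fun x => le_max_right _ _
  have hg : ConvexOn ℝ (univ : Set ℝ) (fun x => lam * (|x| + a / 2 * (p x) ^ 2)) := by
    have h2 := (convexOn_sq_comp hp_conv hp0).smul (le_of_lt (half_pos ha))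
    have h3 : ConvexOn ℝ (univ : Set ℝ) (fun x => |x| + a / 2 * (p x) ^ 2) := by
      have hh := convexOn_abs'.add h2
      simp [smul_eq_mul] at hh ⊢
      exact hh
    simpa [smul_eq_mul] using h3.smul (le_of_lt hlam)
  have hq : StrictConvexOn ℝ (univ : Set ℝ) (fun x : ℝ => (1 - lam * a) / 2 * x ^ 2) := by
    have h2 : StrictConvexOn ℝ (univ : Set ℝ) (fun x : ℝ => x ^ 2) :=
      Even.strictConvexOn_pow (by norm_num) (by norm_num)
    exact strictConvexOn_mul (by linarith) h2
  have key : ∀ x, f x = (1 - lam * a) / 2 * x ^ 2 + lam * (|x| + a / 2 * (p x) ^ 2) := by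
    intro x
    rw [hf x, hφ x]
    have ha' : a ≠ 0 := ne_of_gt ha
    by_cases hx : |x| ≤ 1 / a
    · have hpx : p x = 0 := by
        simp only [hp_def]
        exact max_eq_right (by linarith)
      rw [if_pos hx, hpx]
      ring
    · push_neg at hx
      have hpx : p x = |x| - 1 / a := by
        simp only [hp_def]
        exact max_eq_left (by linarith)
      rw [if_neg (not_le.mpr hx), hpx]
      have ht : |x| ^ 2 = x ^ 2 := sq_abs x
      generalize |x| = t at ht ⊢
      rw [← ht]
      field_simp
      ring
  have hsum := hq.add_convexOn hg
  have hfe : f = fun x => (1 - lam * a) / 2 * x ^ 2 + lam * (|x| + a / 2 * (p x) ^ 2) :=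
    funext key
  rw [hfe]
  exact hsum
end

section
/- Let λ > 0 and 0 < a < 1/λ, and let s(x;a) = φ(x;a) - |x| for the partly quadratic penalty φ. Then g(x) = (1/2)x² + λ·s(x;a) is strictly convex on ℝ. -/
lemma aux_smul_strict {c : ℝ} (hc : 0 < c) {f : ℝ → ℝ}
    (hf : StrictConvexOn ℝ Set.univ f) :
    StrictConvexOn ℝ Set.univ (fun x => c * f x) := by
  refine ⟨convex_univ, fun x hx y hy hxy p q hp hq hpq => ?_⟩
  have := hf.2 hx hy hxy hp hq hpq
  simp only [smul_eq_mul] at *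
  nlinarith

theorem stmt_6 (a lam : ℝ) (ha : 0 < a) (hlam : 0 < lam) (h : a < 1 / lam)
    (s g : ℝ → ℝ)
    (hs : ∀ x, s x = if |x| ≤ 1 / a then -(a / 2) * x ^ 2 else 1 / (2 * a) - |x|)
    (hg : ∀ x, g x = 1 / 2 * x ^ 2 + lam * s x) :
    StrictConvexOn ℝ Set.univ g := by
  have hla : lam * a < 1 := by
    rw [lt_div_iff₀ hlam] at h; nlinarith
  have hcpos : (0:ℝ) < (1 - lam * a) / 2 := by linarith
  have hgeq : g = fun x => (1 - lam * a) / 2 * x ^ 2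
      + lam * (a / 2 * (max (|x| - 1 / a) 0) ^ 2) := by
    funext x
    rw [hg, hs]
    rcases le_or_gt (|x|) (1 / a) with hx | hx
    · rw [if_pos hx, max_eq_right (by linarith)]
      ring
    · rw [if_neg (not_le.mpr hx), max_eq_left (by linarith)]
      have hsq : |x| ^ 2 = x ^ 2 := sq_abs x
      have ha' : a ≠ 0 := ne_of_gt ha
      rw [← hsq]
      field_simp
      linear_combination (0:ℝ) * hsq
  rw [hgeq]
  apply StrictConvexOn.add_convexOn
  · exact aux_smul_strict hcpos (Even.strictConvexOn_pow even_two two_ne_zero)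
  · have habs : ConvexOn ℝ Set.univ (fun x : ℝ => |x|) := by
      exact (convexOn_univ_norm (E := ℝ)).congr (fun x _ => Real.norm_eq_abs x)
    have hu : ConvexOn ℝ Set.univ (fun x : ℝ => max (|x| - 1 / a) 0) := by
      have h1 : ConvexOn ℝ Set.univ (fun x : ℝ => |x| - 1 / a) :=
        habs.sub (concaveOn_const _ convex_univ)
      simpa [max_def, Pi.sup_def] using h1.sup (convexOn_const 0 convex_univ)
    have hu2 : ConvexOn ℝ Set.univ (fun x : ℝ => (max (|x| - 1 / a) 0) ^ 2) := by
      have := hu.pow (fun x _ => le_max_right _ _) 2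
      simpa [Pi.pow_def] using this
    have h3 : ConvexOn ℝ Set.univ (fun x : ℝ => a / 2 * (max (|x| - 1 / a) 0) ^ 2) := by
      simpa [smul_eq_mul] using hu2.smul (by positivity : (0:ℝ) ≤ a / 2)
    simpa [smul_eq_mul] using h3.smul (le_of_lt hlam)
end

section
/- Let λ > 0 and 0 < a < 1/λ, and let φ be the partly quadratic penalty. For each y ∈ ℝ, the firm threshold value x* = Θ(y;λ,a) = sign(y)·min{|y|, max{(|y|-λ)/(1-aλ), 0}} is the unique global minimizer of x ↦ (1/2)(y-x)² + λφ(x;a). -/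
noncomputable def Gfun (lam a y t : ℝ) : ℝ :=
  1 / 2 * (y - t) ^ 2 + lam * (if |t| ≤ 1 / a then |t| - a / 2 * t ^ 2 else 1 / (2 * a))

lemma Gfun_neg (lam a y t : ℝ) : Gfun lam a (-y) (-t) = Gfun lam a y t := by
  unfold Gfun
  rw [abs_neg, neg_sq, (by ring : (-y - -t) = -(y - t)), neg_sq]

lemma Gfun_negx (lam a y t : ℝ) : Gfun lam a y (-t) = Gfun lam a y t + 2 * y * t := by
  unfold Gfun
  rw [abs_neg, neg_sq]
  split_ifs <;> ring

set_option maxHeartbeats 1000000 in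
lemma key (lam a : ℝ) (hlam : 0 < lam) (ha : 0 < a) (hal : a * lam < 1)
    (y : ℝ) (hy : 0 ≤ y) (T : ℝ)
    (hT : T = min y (max ((y - lam) / (1 - a * lam)) 0)) :
    ∀ x : ℝ, x ≠ T → Gfun lam a y T < Gfun lam a y x := by
  have hb : 0 < 1 - a * lam := by linarith
  have hla : lam < 1 / a := by
    rw [lt_div_iff₀ ha]; nlinarith
  have hia : 0 < 1 / a := by positivity
  have main : ∀ t, 0 ≤ t → t ≠ T → Gfun lam a y T < Gfun lam a y t := by
    intro t ht htne
    by_cases hyl : y ≤ lam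
    · have hTe : T = 0 := by
        rw [hT, max_eq_right (div_nonpos_iff.mpr (Or.inr ⟨by linarith, hb.le⟩)),
          min_eq_right hy]
      have ht' : 0 < t := ht.lt_of_ne (Ne.symm (hTe ▸ htne))
      unfold Gfun
      rw [hTe, abs_zero, abs_of_nonneg ht, if_pos hia.le]
      by_cases hta : t ≤ 1 / a
      · rw [if_pos hta]
        nlinarith [mul_nonneg (sub_nonneg.mpr hyl) ht, mul_pos hb (mul_pos ht' ht')]
      · rw [if_neg hta]
        push_neg at hta
        have h2 : 0 < 1 / (2 * a) - lam / 2 := by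
          have e : 1 / (2 * a) = (1 / a) / 2 := by ring
          linarith
        nlinarith [sq_nonneg (t - lam), mul_pos hlam h2,
          mul_nonneg (sub_nonneg.mpr hyl) ht]
    · push_neg at hyl
      by_cases hya : y ≤ 1 / a
      · have hay : y * a ≤ 1 := (le_div_iff₀ ha).mp hya
        have hay' : 0 ≤ lam * (1 - y * a) := mul_nonneg hlam.le (by linarith)
        have hTv : T = (y - lam) / (1 - a * lam) := by
          rw [hT, max_eq_left (le_of_lt (div_pos (by linarith) hb)),
            min_eq_right ((div_le_iff₀ hb).mpr (by nlinarith [hay']))]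
        have hTe : T * (1 - a * lam) = y - lam := by rw [hTv]; exact div_mul_cancel₀ _ hb.ne'
        have hT1 : 0 < T := hTv ▸ div_pos (by linarith) hb
        have hTle : T ≤ 1 / a := by
          rw [hTv, div_le_iff₀ hb, div_mul_eq_mul_div, le_div_iff₀ ha]; nlinarith [hay']
        unfold Gfun
        rw [abs_of_nonneg hT1.le, if_pos hTle, abs_of_nonneg ht]
        by_cases hta : t ≤ 1 / a
        · rw [if_pos hta]
          have hsq : 0 < (t - T) ^ 2 :=
            lt_of_le_of_ne (sq_nonneg _) (Ne.symm (pow_ne_zero 2 (sub_ne_zero.mpr htne)))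
          have hid : 1 / 2 * (y - t) ^ 2 + lam * (t - a / 2 * t ^ 2) -
              (1 / 2 * (y - T) ^ 2 + lam * (T - a / 2 * T ^ 2)) =
              (1 - a * lam) / 2 * (t - T) ^ 2 + (T * (1 - a * lam) - (y - lam)) * (t - T) := by
            ring
          rw [hTe] at hid
          have := mul_pos (by positivity : (0:ℝ) < (1 - a * lam) / 2) hsq
          linarith [hid]
        · rw [if_neg hta]
          push_neg at hta
          have key1 : 1 / 2 * (y - T) ^ 2 + lam * (T - a / 2 * T ^ 2) ≤
              1 / 2 * (y - 1 / a) ^ 2 + lam * (1 / a - a / 2 * (1 / a) ^ 2) := by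
            have hid : 1 / 2 * (y - 1 / a) ^ 2 + lam * (1 / a - a / 2 * (1 / a) ^ 2) -
                (1 / 2 * (y - T) ^ 2 + lam * (T - a / 2 * T ^ 2)) =
                (1 - a * lam) / 2 * (1 / a - T) ^ 2 +
                  (T * (1 - a * lam) - (y - lam)) * (1 / a - T) := by ring
            rw [hTe] at hid
            nlinarith [mul_nonneg (by positivity : (0:ℝ) ≤ (1 - a * lam) / 2)
              (sq_nonneg (1 / a - T))]
          have key2 : lam * (1 / a - a / 2 * (1 / a) ^ 2) = lam * (1 / (2 * a)) := by
            field_simp; ring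
          have key3 : 1 / 2 * (y - 1 / a) ^ 2 < 1 / 2 * (y - t) ^ 2 := by
            nlinarith [mul_pos (sub_pos.mpr hta) (show 0 < t + 1 / a - 2 * y by linarith)]
          linarith
      · push_neg at hya
        have hay : 1 < a * y := by
          have := (div_lt_iff₀ ha).mp hya
          linarith
        have hay' : 0 ≤ lam * (a * y - 1) := mul_nonneg hlam.le (by linarith)
        have hTv : T = y := by
          rw [hT, max_eq_left (le_of_lt (div_pos (by linarith) hb)),
            min_eq_left ((le_div_iff₀ hb).mpr (by nlinarith [hay']))]
        unfold Gfun
        rw [hTv, abs_of_nonneg hy, if_neg (not_le.mpr hya), abs_of_nonneg ht]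
        by_cases hta : t ≤ 1 / a
        · rw [if_pos hta]
          have e1 : (0:ℝ) ≤ 1 / a - t := by linarith
          have e2 : 1 / a - t < y - t := by linarith
          have e3 : (1 / a - t) ^ 2 < (y - t) ^ 2 := by nlinarith
          have e4 : lam * (1 / (2 * a)) - lam * (t - a / 2 * t ^ 2) =
              lam * a / 2 * (1 / a - t) ^ 2 := by
            field_simp
            ring
          have e5 : lam * a / 2 * (1 / a - t) ^ 2 ≤ 1 / 2 * (1 / a - t) ^ 2 := by
            nlinarith [mul_nonneg hb.le (sq_nonneg (1 / a - t))]
          linarith [e3, e4, e5]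
        · rw [if_neg hta]
          have htny : t ≠ y := fun e => htne (e.trans hTv.symm)
          have hsq : 0 < (y - t) ^ 2 :=
            lt_of_le_of_ne (sq_nonneg _)
              (Ne.symm (pow_ne_zero 2 (sub_ne_zero.mpr (Ne.symm htny))))
          nlinarith [hsq]
  have main2 : ∀ t, 0 ≤ t → Gfun lam a y T ≤ Gfun lam a y t := by
    intro t ht
    rcases eq_or_ne t T with rfl | hne
    · exact le_rfl
    · exact (main t ht hne).le
  intro x hx
  rcases le_or_gt 0 x with hx0 | hx0
  · exact main x hx0 hx
  · have ht : 0 < -x := by linarith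
    have hGx : Gfun lam a y x = Gfun lam a y (-x) + 2 * y * (-x) := by
      rw [← Gfun_negx lam a y (-x), neg_neg]
    rcases eq_or_lt_of_le hy with hy0 | hy0
    · have hT0 : T = 0 := by
        rw [hT, ← hy0]
        exact min_eq_left (le_max_right _ _)
      have h2 := main (-x) ht.le (by rw [hT0]; exact ht.ne')
      rw [hGx, ← hy0]
      rw [← hy0] at h2
      linarith
    · have h1 : 0 < 2 * y * (-x) := by positivity
      have := main2 (-x) ht.le
      rw [hGx]; linarith

theorem stmt_11 (lam a : ℝ) (hlam : 0 < lam) (ha : 0 < a) (h : a < 1 / lam)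
    (φ Θ : ℝ → ℝ)
    (hφ : ∀ x, φ x = if |x| ≤ 1 / a then |x| - a / 2 * x ^ 2 else 1 / (2 * a))
    (hΘ : ∀ y, Θ y = Real.sign y * min |y| (max ((|y| - lam) / (1 - a * lam)) 0)) :
    ∀ y x : ℝ, x ≠ Θ y →
      1 / 2 * (y - Θ y) ^ 2 + lam * φ (Θ y) < 1 / 2 * (y - x) ^ 2 + lam * φ x := by
  have hal : a * lam < 1 := by
    rw [lt_div_iff₀ hlam] at h; linarith
  intro y x hx
  rw [hφ x, hφ (Θ y)]
  rcases le_or_gt 0 y with hy | hy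
  · have hTval : Θ y = min y (max ((y - lam) / (1 - a * lam)) 0) := by
      rcases eq_or_lt_of_le hy with hy0 | hy0
      · rw [hΘ, ← hy0, Real.sign_zero, zero_mul]
        exact (min_eq_left (le_max_right _ _)).symm
      · rw [hΘ, Real.sign_of_pos hy0, abs_of_pos hy0, one_mul]
    exact key lam a hlam ha hal y hy (Θ y) hTval x hx
  · have hTval : -Θ y = min (-y) (max ((-y - lam) / (1 - a * lam)) 0) := by
      rw [hΘ, Real.sign_of_neg hy, abs_of_neg hy]; ring_nf
    have := key lam a hlam ha hal (-y) (by linarith) (-(Θ y)) hTval (-x)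
      (fun e => hx (neg_injective e))
    rw [Gfun_neg, Gfun_neg] at this
    exact this
end

section
/- Let λ > 0 and 0 < a < 1/λ, and let φ be the partly quadratic penalty. If |y| ≥ 1/a, then Θ(y;λ,a) = y, i.e., the minimizer of x ↦ (1/2)(y-x)² + λφ(x;a) equals y itself. -/
theorem stmt_12 (lam a : ℝ) (hlam : 0 < lam) (ha : 0 < a) (h : a < 1 / lam)
    (φ Θ : ℝ → ℝ)
    (hφ : ∀ x, φ x = if |x| ≤ 1 / a then |x| - a / 2 * x ^ 2 else 1 / (2 * a))
    (hΘ : ∀ y, Θ y = Real.sign y * min |y| (max ((|y| - lam) / (1 - a * lam)) 0)) :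
    ∀ y : ℝ, 1 / a ≤ |y| →
      Θ y = y ∧ ∀ x : ℝ, 1 / 2 * (y - y) ^ 2 + lam * φ y ≤ 1 / 2 * (y - x) ^ 2 + lam * φ x := by
  intro y hy
  have ha' : (0:ℝ) < 1 / a := by positivity
  have hal : a * lam < 1 := by
    have := (lt_div_iff₀ hlam).mp h
    linarith
  have hay : 1 ≤ a * |y| := by
    have := (div_le_iff₀ ha).mp hy
    linarith [mul_comm a |y|]
  constructor
  · rw [hΘ]
    have h1 : |y| ≤ (|y| - lam) / (1 - a * lam) := by
      rw [le_div_iff₀ (by linarith)]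
      nlinarith [abs_nonneg y]
    rw [max_eq_left (le_trans (abs_nonneg y) h1), min_eq_left h1]
    rcases lt_trichotomy y 0 with hy0 | hy0 | hy0
    · rw [Real.sign_of_neg hy0, abs_of_neg hy0]; ring
    · exfalso; rw [hy0, abs_zero] at hy; linarith
    · rw [Real.sign_of_pos hy0, abs_of_pos hy0]; ring
  · intro x
    rw [hφ y, hφ x]
    have hφy : (if |y| ≤ 1 / a then |y| - a / 2 * y ^ 2 else 1 / (2 * a)) = 1 / (2 * a) := by
      split_ifs with hc
      · have hya : |y| = 1 / a := le_antisymm hc hy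
        have hy2 : y ^ 2 = (1 / a) ^ 2 := by rw [← sq_abs, hya]
        rw [hya, hy2]
        field_simp
        ring
      · rfl
    rw [hφy]
    split_ifs with hc
    · have hx2 : x ^ 2 = |x| ^ 2 := (sq_abs x).symm
      have hk : (1 / a - |x|) ^ 2 ≤ (y - x) ^ 2 := by
        have h1 : |y| - |x| ≤ |y - x| := abs_sub_abs_le_abs_sub y x
        have h2 : (0:ℝ) ≤ 1 / a - |x| := by linarith
        have h3 : (y - x) ^ 2 = |y - x| ^ 2 := (sq_abs _).symm
        nlinarith [abs_nonneg (y - x)]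
      have e1 : lam * a / 2 * (1 / a - |x|) ^ 2 = lam * (1 / a) / 2 - lam * |x| + lam * a / 2 * |x| ^ 2 := by
        field_simp
        ring_nf
      have e2 : lam * (1 / (2 * a)) = lam * (1 / a) / 2 := by
        ring
      have key : lam * a / 2 * (1 / a - |x|) ^ 2 ≤ 1 / 2 * (y - x) ^ 2 := by
        nlinarith [sq_nonneg (1 / a - |x|), mul_pos ha hlam]
      rw [hx2]
      nlinarith [key, e1, e2]
    · nlinarith [sq_nonneg (y - x), sq_nonneg (y - y)]
end

section
/- Von Neumann's trace inequality: for real n×n matrices A and B, tr(AᵀB) ≤ Σᵢ σᵢ(A)·σᵢ(B), where σᵢ denotes the singular values in nonincreasing order. -/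
open Matrix

section VonNeumannAux

open Matrix Finset

variable {n : ℕ}

/-- descending sort of a tuple -/
noncomputable def sortd (f : Fin n → ℝ) : Fin n → ℝ := fun i => (f ∘ Tuple.sort f) i.rev

lemma antitone_sortd (f : Fin n → ℝ) : Antitone (sortd f) := by
  have h1 : Monotone (f ∘ Tuple.sort f) := Tuple.monotone_sort f
  have h2 : Antitone (Fin.rev : Fin n → Fin n) := fun a b h => Fin.rev_le_rev.mpr h
  exact h1.comp_antitone h2

lemma exists_perm_sortd (f : Fin n → ℝ) : ∃ e : Equiv.Perm (Fin n), ∀ x, f x = sortd f (e x) := by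
  refine ⟨(Tuple.sort f).symm.trans (Fin.revPerm), fun x => ?_⟩
  simp [sortd, Fin.rev_rev]

lemma rearrange_le (f g : Fin n → ℝ) (π : Equiv.Perm (Fin n)) :
    ∑ i, f i * g (π i) ≤ ∑ i, sortd f i * sortd g i := by
  obtain ⟨ef, hef⟩ := exists_perm_sortd f
  obtain ⟨eg, heg⟩ := exists_perm_sortd g
  set ρ : Equiv.Perm (Fin n) := ef.symm.trans (π.trans eg) with hρ
  have key : ∑ i, f i * g (π i) = ∑ i, sortd f i * sortd g (ρ i) := by
    rw [← Equiv.sum_comp ef (fun i => sortd f i * sortd g (ρ i))]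
    refine Finset.sum_congr rfl fun x _ => ?_
    simp [hρ, ← hef, ← heg]
  rw [key]
  exact ((antitone_sortd f).monovary (antitone_sortd g)).sum_mul_comp_perm_le_sum_mul (σ := ρ)

lemma ds_bound (f g : Fin n → ℝ) (D : Matrix (Fin n) (Fin n) ℝ)
    (hD : D ∈ doublyStochastic ℝ (Fin n)) :
    ∑ i, ∑ j, f i * g j * D i j ≤ ∑ i, sortd f i * sortd g i := by
  obtain ⟨w, hw0, hw1, hwD⟩ := exists_eq_sum_perm_of_mem_doublyStochastic hD
  have hDij : ∀ i j, D i j = ∑ π : Equiv.Perm (Fin n), w π * (if j = π i then 1 else 0) := by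
    intro i j
    rw [← hwD]
    simp [Matrix.sum_apply, Equiv.Perm.permMatrix, PEquiv.toMatrix_apply, Equiv.toPEquiv_apply]
    exact Finset.sum_congr rfl fun π _ => by simp [eq_comm]
  calc ∑ i, ∑ j, f i * g j * D i j
      = ∑ π : Equiv.Perm (Fin n), w π * ∑ i, f i * g (π i) := by
        simp_rw [hDij, Finset.mul_sum]
        rw [Finset.sum_comm (γ := Equiv.Perm (Fin n))]
        refine Finset.sum_congr rfl fun π _ => ?_
        rw [Finset.sum_comm]
        refine Finset.sum_congr rfl fun i _ => ?_
        simp [mul_ite, mul_comm, mul_left_comm]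
    _ ≤ ∑ π : Equiv.Perm (Fin n), w π * ∑ i, sortd f i * sortd g i := by
        refine Finset.sum_le_sum fun π _ => ?_
        exact mul_le_mul_of_nonneg_left (rearrange_le f g π) (hw0 π)
    _ = ∑ i, sortd f i * sortd g i := by
        rw [← Finset.sum_mul, hw1, one_mul]

lemma sq_doublyStochastic (P : Matrix (Fin n) (Fin n) ℝ) (h1 : Pᵀ * P = 1) (h2 : P * Pᵀ = 1) :
    Matrix.of (fun i j => P i j ^ 2) ∈ doublyStochastic ℝ (Fin n) := by
  rw [mem_doublyStochastic_iff_sum]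
  refine ⟨fun i j => sq_nonneg _, fun i => ?_, fun j => ?_⟩
  · have := congrFun (congrFun h2 i) i
    simpa [Matrix.mul_apply, Matrix.one_apply, pow_two] using this
  · have := congrFun (congrFun h1 j) j
    simpa [Matrix.mul_apply, Matrix.one_apply, pow_two] using this

lemma svd_exists (A : Matrix (Fin n) (Fin n) ℝ) :
    ∃ U V : Matrix (Fin n) (Fin n) ℝ,
      Uᵀ * U = 1 ∧ U * Uᵀ = 1 ∧ Vᵀ * V = 1 ∧ V * Vᵀ = 1 ∧
      A = U * Matrix.diagonal
        (fun i => Real.sqrt ((Matrix.isHermitian_conjTranspose_mul_self A).eigenvalues i)) * Vᵀ := by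
  set hH := Matrix.isHermitian_conjTranspose_mul_self A with hHdef
  set μ : Fin n → ℝ := hH.eigenvalues with hμdef
  have hμ0 : ∀ i, 0 ≤ μ i := Matrix.eigenvalues_conjTranspose_mul_self_nonneg A
  set σ : Fin n → ℝ := fun i => Real.sqrt (μ i) with hσdef
  set V : Matrix (Fin n) (Fin n) ℝ := (hH.eigenvectorUnitary : Matrix (Fin n) (Fin n) ℝ) with hVdef
  have hVmem := hH.eigenvectorUnitary.2
  rw [Unitary.mem_iff] at hVmem
  have hstarV : star V = Vᵀ := by
    ext i j; simp [Matrix.star_apply, Matrix.transpose_apply]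
  have hV1 : Vᵀ * V = 1 := by rw [← hstarV]; exact hVmem.1
  have hV2 : V * Vᵀ = 1 := by rw [← hstarV]; exact hVmem.2
  have spec : Aᴴ * A = V * Matrix.diagonal μ * Vᵀ := by
    have h := hH.spectral_theorem
    rw [Unitary.conjStarAlgAut_apply, hstarV] at h
    have h2 : (RCLike.ofReal ∘ μ : Fin n → ℝ) = μ := by ext x; simp
    rwa [h2] at h
  -- columns of A * V
  set c : Fin n → EuclideanSpace ℝ (Fin n) :=
    fun i => (WithLp.equiv 2 (Fin n → ℝ)).symm (fun k => (A * V) k i) with hcdef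
  have hck : ∀ i k, c i k = (A * V) k i := fun i k => rfl
  have hinner : ∀ i j, inner ℝ (c i) (c j) = Matrix.diagonal μ i j := by
    intro i j
    have hmat : (A * V)ᵀ * (A * V) = Matrix.diagonal μ := by
      have hAT : Aᵀ = Aᴴ := (Matrix.conjTranspose_eq_transpose_of_trivial A).symm
      rw [Matrix.transpose_mul, hAT, ← Matrix.mul_assoc, Matrix.mul_assoc Vᵀ, spec]
      simp only [← Matrix.mul_assoc]
      rw [hV1, one_mul, Matrix.mul_assoc, hV1, mul_one]
    rw [← congrFun (congrFun hmat i) j]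
    simp [PiLp.inner_apply, RCLike.inner_apply, Matrix.mul_apply, hck, mul_comm]
  -- normalized columns on the support of μ
  set u : Fin n → EuclideanSpace ℝ (Fin n) := fun i => (σ i)⁻¹ • c i with hudef
  have hσpos : ∀ i, μ i ≠ 0 → 0 < σ i := fun i hi => Real.sqrt_pos.mpr (lt_of_le_of_ne (hμ0 i) (Ne.symm hi))
  have hσsq : ∀ i, σ i * σ i = μ i := fun i => Real.mul_self_sqrt (hμ0 i)
  have hu : Orthonormal ℝ ({i | μ i ≠ 0}.restrict u) := by
    rw [orthonormal_iff_ite]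
    rintro ⟨i, hi⟩ ⟨j, hj⟩
    simp only [Set.restrict_apply, Set.restrict, hudef]
    rw [real_inner_smul_left, real_inner_smul_right, hinner]
    by_cases hij : i = j
    · subst hij
      simp only [Matrix.diagonal_apply_eq, eq_self_iff_true, if_true]
      have hne := ne_of_gt (hσpos i hi)
      field_simp
      rw [← hσsq i]
      ring
    · rw [Matrix.diagonal_apply_ne _ hij, if_neg (by simpa [Subtype.ext_iff] using hij)]
      ring
  obtain ⟨b, hb⟩ := hu.exists_orthonormalBasis_extension_of_card_eq (by simp)
  set U : Matrix (Fin n) (Fin n) ℝ := Matrix.of (fun k i => b i k) with hUdef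
  have hU1 : Uᵀ * U = 1 := by
    ext i j
    have := b.orthonormal
    rw [orthonormal_iff_ite] at this
    have h := this i j
    rw [Matrix.mul_apply, Matrix.one_apply]
    rw [← h]
    simp [PiLp.inner_apply, RCLike.inner_apply, hUdef, mul_comm]
  have hU2 : U * Uᵀ = 1 := mul_eq_one_comm.mp hU1
  have hAV : A * V = U * Matrix.diagonal σ := by
    ext k j
    rw [Matrix.mul_diagonal]
    by_cases hμj : μ j = 0
    · have hcj : c j = 0 := by
        have : inner ℝ (c j) (c j) = (0 : ℝ) := by rw [hinner, Matrix.diagonal_apply_eq, hμj]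
        exact inner_self_eq_zero.mp this
      have hσj : σ j = 0 := by simp [hσdef, hμj]
      rw [hσj, mul_zero, ← hck j k, hcj]
      rfl
    · have hbj : b j = u j := hb j hμj
      have hσj : σ j ≠ 0 := ne_of_gt (hσpos j hμj)
      have : U k j = (σ j)⁻¹ * c j k := by
        simp only [hUdef, Matrix.of_apply, hbj, hudef]
        rfl
      rw [this, ← hck j k]
      field_simp
  refine ⟨U, V, hU1, hU2, hV1, hV2, ?_⟩
  calc A = A * (V * Vᵀ) := by rw [hV2, mul_one]
    _ = (A * V) * Vᵀ := by rw [Matrix.mul_assoc]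
    _ = U * Matrix.diagonal σ * Vᵀ := by rw [hAV]

end VonNeumannAux

/-- Singular values of a real square matrix, in nonincreasing order. -/
noncomputable def svals {n : ℕ} (A : Matrix (Fin n) (Fin n) ℝ) : Fin n → ℝ :=
  fun i =>
    let e : Fin n → ℝ := fun j => Real.sqrt ((Matrix.isHermitian_conjTranspose_mul_self A).eigenvalues j)
    (e ∘ Tuple.sort e) i.rev

theorem stmt_16 (n : ℕ) (A B : Matrix (Fin n) (Fin n) ℝ) :
    (Aᵀ * B).trace ≤ ∑ i, svals A i * svals B i := by
  obtain ⟨U₁, V₁, hU₁1, hU₁2, hV₁1, hV₁2, hA⟩ := svd_exists A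
  obtain ⟨U₂, V₂, hU₂1, hU₂2, hV₂1, hV₂2, hB⟩ := svd_exists B
  set σ : Fin n → ℝ := fun i => Real.sqrt ((Matrix.isHermitian_conjTranspose_mul_self A).eigenvalues i) with hσdef
  set τ : Fin n → ℝ := fun i => Real.sqrt ((Matrix.isHermitian_conjTranspose_mul_self B).eigenvalues i) with hτdef
  have hσ0 : ∀ i, 0 ≤ σ i := fun i => Real.sqrt_nonneg _
  have hτ0 : ∀ i, 0 ≤ τ i := fun i => Real.sqrt_nonneg _
  set P : Matrix (Fin n) (Fin n) ℝ := U₁ᵀ * U₂ with hPdef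
  set Q : Matrix (Fin n) (Fin n) ℝ := V₂ᵀ * V₁ with hQdef
  have hP1 : Pᵀ * P = 1 := by
    rw [hPdef, Matrix.transpose_mul, Matrix.transpose_transpose, Matrix.mul_assoc,
      ← Matrix.mul_assoc U₁, hU₁2, one_mul, hU₂1]
  have hP2 : P * Pᵀ = 1 := mul_eq_one_comm.mp hP1
  have hQ1 : Qᵀ * Q = 1 := by
    rw [hQdef, Matrix.transpose_mul, Matrix.transpose_transpose, Matrix.mul_assoc,
      ← Matrix.mul_assoc V₂, hV₂2, one_mul, hV₁1]
  have hQ2 : Q * Qᵀ = 1 := mul_eq_one_comm.mp hQ1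
  have hsvA : svals A = sortd σ := rfl
  have hsvB : svals B = sortd τ := rfl
  set T : ℝ := ∑ i, sortd σ i * sortd τ i with hTdef
  have htr : (Aᵀ * B).trace = ∑ i, ∑ j, σ i * τ j * (P i j * Q j i) := by
    have e1 : Aᵀ * B = V₁ * (Matrix.diagonal σ * (U₁ᵀ * (U₂ * (Matrix.diagonal τ * V₂ᵀ)))) := by
      rw [hA, hB]
      simp only [Matrix.transpose_mul, Matrix.transpose_transpose, Matrix.diagonal_transpose,
        Matrix.mul_assoc]
    rw [e1, Matrix.trace_mul_comm]
    have e2 : (Matrix.diagonal σ * (U₁ᵀ * (U₂ * (Matrix.diagonal τ * V₂ᵀ)))) * V₁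
        = Matrix.diagonal σ * (P * (Matrix.diagonal τ * Q)) := by
      rw [hPdef, hQdef]
      simp only [Matrix.mul_assoc]
    rw [e2, Matrix.trace]
    refine Finset.sum_congr rfl fun i _ => ?_
    rw [Matrix.diag_apply, Matrix.diagonal_mul, Matrix.mul_apply, Finset.mul_sum]
    refine Finset.sum_congr rfl fun j _ => ?_
    rw [Matrix.diagonal_mul]
    ring
  have hDP := sq_doublyStochastic P hP1 hP2
  have hDQ := sq_doublyStochastic Qᵀ (by rwa [Matrix.transpose_transpose])
    (by rwa [Matrix.transpose_transpose])
  have h1 : ∑ i, ∑ j, σ i * τ j * (P i j ^ 2) ≤ T := by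
    have h := ds_bound σ τ (Matrix.of fun i j => P i j ^ 2) hDP
    simpa using h
  have h2 : ∑ i, ∑ j, σ i * τ j * (Q j i ^ 2) ≤ T := by
    have h := ds_bound σ τ (Matrix.of fun i j => Qᵀ i j ^ 2) hDQ
    simpa [Matrix.transpose_apply] using h
  have hgoal : ∑ i, svals A i * svals B i = T := by rw [hsvA, hsvB]
  rw [htr, hgoal]
  calc ∑ i, ∑ j, σ i * τ j * (P i j * Q j i)
      ≤ ∑ i, ∑ j, σ i * τ j * (P i j ^ 2 / 2 + Q j i ^ 2 / 2) := by
        refine Finset.sum_le_sum fun i _ => Finset.sum_le_sum fun j _ => ?_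
        refine mul_le_mul_of_nonneg_left ?_ (mul_nonneg (hσ0 i) (hτ0 j))
        nlinarith [sq_nonneg (P i j - Q j i)]
    _ = (∑ i, ∑ j, σ i * τ j * P i j ^ 2) / 2 + (∑ i, ∑ j, σ i * τ j * Q j i ^ 2) / 2 := by
        rw [Finset.sum_div, Finset.sum_div, ← Finset.sum_add_distrib]
        refine Finset.sum_congr rfl fun i _ => ?_
        rw [Finset.sum_div, Finset.sum_div, ← Finset.sum_add_distrib]
        refine Finset.sum_congr rfl fun j _ => ?_
        ring
    _ ≤ T / 2 + T / 2 := by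
        exact add_le_add (by linarith) (by linarith)
    _ = T := by ring
end

section
/- Let λ > 0, 0 < a < 1/λ, and φ the partly quadratic penalty. For an n×n real matrix Y, the function Ψ(X) = (1/2)‖Y-X‖_F² + λ·Σᵢ φ(σᵢ(X);a) is strictly convex in X. -/
open Matrix

namespace SvalsAux

open Finset

variable {n : ℕ}

lemma dot_mulVec_self (A : Matrix (Fin n) (Fin n) ℝ) (x y : Fin n → ℝ) :
    (A *ᵥ x) ⬝ᵥ (A *ᵥ y) = x ⬝ᵥ ((Aᵀ * A) *ᵥ y) := by
  rw [Matrix.dotProduct_mulVec, Matrix.dotProduct_mulVec, Matrix.vecMul_mulVec]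

lemma einner (x y : EuclideanSpace ℝ (Fin n)) :
    (inner ℝ x y : ℝ) = (fun i => x i) ⬝ᵥ (fun i => y i) := by
  simp [PiLp.inner_apply, RCLike.inner_apply, dotProduct, mul_comm]

lemma svals_exists_perm (A : Matrix (Fin n) (Fin n) ℝ) :
    ∃ ρ : Equiv.Perm (Fin n), ∀ i, svals A i
      = Real.sqrt ((Matrix.isHermitian_conjTranspose_mul_self A).eigenvalues (ρ i)) := by
  exact ⟨Fin.revPerm.trans (Tuple.sort _), fun i => rfl⟩

lemma svals_nonneg (A : Matrix (Fin n) (Fin n) ℝ) (i : Fin n) : 0 ≤ svals A i := by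
  obtain ⟨ρ, hρ⟩ := svals_exists_perm A
  rw [hρ]; exact Real.sqrt_nonneg _

lemma svals_antitone (A : Matrix (Fin n) (Fin n) ℝ) : Antitone (svals A) := by
  intro i j hij
  exact Tuple.monotone_sort
    (fun j => Real.sqrt ((Matrix.isHermitian_conjTranspose_mul_self A).eigenvalues j))
    (Fin.rev_le_rev.mpr hij)

lemma eig_nonneg (A : Matrix (Fin n) (Fin n) ℝ) (j : Fin n) :
    0 ≤ (Matrix.isHermitian_conjTranspose_mul_self A).eigenvalues j := by
  have := (Matrix.posSemidef_conjTranspose_mul_self A).eigenvalues_nonneg j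
  simpa [Matrix.conjTranspose] using this

lemma sq_svals (A : Matrix (Fin n) (Fin n) ℝ) (ρ : Equiv.Perm (Fin n))
    (hρ : ∀ i, svals A i
      = Real.sqrt ((Matrix.isHermitian_conjTranspose_mul_self A).eigenvalues (ρ i))) (i : Fin n) :
    (svals A i) ^ 2 = (Matrix.isHermitian_conjTranspose_mul_self A).eigenvalues (ρ i) := by
  rw [hρ, Real.sq_sqrt (eig_nonneg A (ρ i))]

/-- Singular value decomposition. -/
lemma exists_svd (A : Matrix (Fin n) (Fin n) ℝ) :
    ∃ U V : Matrix (Fin n) (Fin n) ℝ,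
      Uᵀ * U = 1 ∧ U * Uᵀ = 1 ∧ Vᵀ * V = 1 ∧ V * Vᵀ = 1 ∧
      A = U * Matrix.diagonal (svals A) * Vᵀ := by
  classical
  obtain ⟨ρ, hρ⟩ := svals_exists_perm A
  set hH := Matrix.isHermitian_conjTranspose_mul_self A with hHdef
  set bv : OrthonormalBasis (Fin n) ℝ (EuclideanSpace ℝ (Fin n)) :=
    hH.eigenvectorBasis.reindex ρ.symm with hbvdef
  have hbv : ∀ i, bv i = hH.eigenvectorBasis (ρ i) := by
    intro i; simp [hbvdef]
  set v : Fin n → Fin n → ℝ := fun j i => bv j i with hvdef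
  have hvon : ∀ i j, v i ⬝ᵥ v j = if i = j then 1 else 0 := by
    intro i j
    have := (orthonormal_iff_ite (𝕜 := ℝ)).mp bv.orthonormal i j
    rw [einner] at this
    simpa [hvdef] using this
  have hAv : ∀ j, (Aᵀ * A) *ᵥ v j = (svals A j) ^ 2 • v j := by
    intro j
    have h1 : (Aᵀ * A) *ᵥ ⇑(hH.eigenvectorBasis (ρ j))
        = hH.eigenvalues (ρ j) • ⇑(hH.eigenvectorBasis (ρ j)) :=
      hH.mulVec_eigenvectorBasis (ρ j)
    have h2 : (v j : Fin n → ℝ) = ⇑(hH.eigenvectorBasis (ρ j)) := by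
      funext i; simp [hvdef, hbv]
    rw [h2, h1, sq_svals A ρ hρ j]
  have key : ∀ i j, (A *ᵥ v i) ⬝ᵥ (A *ᵥ v j) = (svals A j) ^ 2 * (if i = j then 1 else 0) := by
    intro i j
    rw [dot_mulVec_self, hAv j, dotProduct_smul, hvon, smul_eq_mul]
  -- the orthonormal family of left singular vectors on the support
  set s : Set (Fin n) := {j | svals A j ≠ 0} with hsdef
  set u0 : Fin n → EuclideanSpace ℝ (Fin n) :=
    fun j => (svals A j)⁻¹ • ((WithLp.equiv 2 (Fin n → ℝ)).symm (A *ᵥ v j)) with hu0def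
  have hu0on : Orthonormal ℝ (s.restrict u0) := by
    rw [orthonormal_iff_ite]
    intro i j
    have hi : svals A (i : Fin n) ≠ 0 := i.2
    have hj : svals A (j : Fin n) ≠ 0 := j.2
    have : (inner ℝ (u0 i) (u0 j) : ℝ)
        = (svals A (i : Fin n))⁻¹ * ((svals A (j : Fin n))⁻¹
          * ((A *ᵥ v i) ⬝ᵥ (A *ᵥ v j))) := by
      rw [hu0def]
      rw [real_inner_smul_left, real_inner_smul_right, einner]
      rfl
    rw [show s.restrict u0 i = u0 i from rfl, show s.restrict u0 j = u0 j from rfl, this, key]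
    by_cases hij : (i : Fin n) = (j : Fin n)
    · have hij' : i = j := Subtype.ext hij
      rw [if_pos hij, if_pos hij', hij]
      field_simp
    · have hij' : ¬ (i = j) := fun hh => hij (congrArg _ hh)
      rw [if_neg hij, if_neg hij']
      ring
  obtain ⟨cB, hcB⟩ := hu0on.exists_orthonormalBasis_extension_of_card_eq
    (by simp [finrank_euclideanSpace])
  have hAveq : ∀ j, A *ᵥ v j = fun i => svals A j * cB j i := by
    intro j
    by_cases hj : svals A j = 0
    · have h0 : (A *ᵥ v j) ⬝ᵥ (A *ᵥ v j) = 0 := by rw [key]; simp [hj]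
      have : A *ᵥ v j = 0 := by
        rwa [dotProduct_self_eq_zero] at h0
      funext i
      rw [this]
      simp [hj]
    · have hjs : j ∈ s := hj
      have := hcB j hjs
      rw [hu0def] at this
      funext i
      have := congrFun (congrArg (fun (x : EuclideanSpace ℝ (Fin n)) => (x : Fin n → ℝ)) this) i
      simp only [PiLp.smul_apply, smul_eq_mul] at this
      rw [this]
      have : ((WithLp.equiv 2 (Fin n → ℝ)).symm (A *ᵥ v j)) i = (A *ᵥ v j) i := rfl
      rw [this]
      field_simp
  have hcBon : ∀ i j, (fun k => cB i k) ⬝ᵥ (fun k => cB j k) = if i = j then 1 else 0 := by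
    intro i j
    have := (orthonormal_iff_ite (𝕜 := ℝ)).mp cB.orthonormal i j
    rw [einner] at this
    simpa using this
  set U : Matrix (Fin n) (Fin n) ℝ := Matrix.of (fun i j => cB j i) with hUdef
  set V : Matrix (Fin n) (Fin n) ℝ := Matrix.of (fun i j => v j i) with hVdef
  have hUtU : Uᵀ * U = 1 := by
    ext i j
    simp only [hUdef, Matrix.mul_apply, Matrix.transpose_apply, Matrix.of_apply, Matrix.one_apply]
    simpa [dotProduct] using hcBon i j
  have hVtV : Vᵀ * V = 1 := by
    ext i j
    simp only [hVdef, Matrix.mul_apply, Matrix.transpose_apply, Matrix.of_apply, Matrix.one_apply]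
    simpa [dotProduct] using hvon i j
  have hUUt : U * Uᵀ = 1 := mul_eq_one_comm.mp hUtU
  have hVVt : V * Vᵀ = 1 := mul_eq_one_comm.mp hVtV
  have hAV : A * V = U * Matrix.diagonal (svals A) := by
    ext i j
    have h1 : (A * V) i j = (A *ᵥ v j) i := by
      simp [hVdef, Matrix.mul_apply, Matrix.mulVec, dotProduct]
    rw [h1, hAveq j, Matrix.mul_diagonal]
    simp [hUdef, mul_comm]
  refine ⟨U, V, hUtU, hUUt, hVtV, hVVt, ?_⟩
  calc A = A * (V * Vᵀ) := by rw [hVVt, mul_one]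
    _ = (A * V) * Vᵀ := by rw [Matrix.mul_assoc]
    _ = U * Matrix.diagonal (svals A) * Vᵀ := by rw [hAV]


lemma orth_conj {U₁ U₂ : Matrix (Fin n) (Fin n) ℝ} (h1 : U₁ * U₁ᵀ = 1) (h2 : U₂ᵀ * U₂ = 1) :
    (U₁ᵀ * U₂)ᵀ * (U₁ᵀ * U₂) = 1 := by
  rw [Matrix.transpose_mul, Matrix.transpose_transpose]
  calc U₂ᵀ * U₁ * (U₁ᵀ * U₂) = U₂ᵀ * (U₁ * U₁ᵀ) * U₂ := by
        simp only [Matrix.mul_assoc]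
    _ = 1 := by rw [h1, Matrix.mul_one, h2]

lemma sum_sq_svals (A : Matrix (Fin n) (Fin n) ℝ) :
    ∑ i, (svals A i) ^ 2 = ∑ i, ∑ j, (A i j) ^ 2 := by
  obtain ⟨U, V, hUtU, hUUt, hVtV, hVVt, hA⟩ := exists_svd A
  set D := Matrix.diagonal (svals A) with hDdef
  have h1 : ∑ i, ∑ j, (A i j) ^ 2 = Matrix.trace (Aᵀ * A) := by
    rw [Matrix.trace, Finset.sum_comm]
    congr 1
    funext j
    simp [Matrix.mul_apply, Matrix.diag, sq]
  have hDt : Dᵀ = D := by rw [hDdef, Matrix.diagonal_transpose]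
  have h2 : Aᵀ * A = V * (D * (D * Vᵀ)) := by
    rw [hA]
    simp only [Matrix.transpose_mul, Matrix.transpose_transpose, hDt, Matrix.mul_assoc]
    rw [← Matrix.mul_assoc Uᵀ U, hUtU, Matrix.one_mul]
  rw [h1, h2, Matrix.trace_mul_comm]
  have h3 : D * (D * Vᵀ) * V = D * D := by
    calc D * (D * Vᵀ) * V = D * (D * (Vᵀ * V)) := by simp only [Matrix.mul_assoc]
      _ = D * D := by rw [hVtV, Matrix.mul_one]
  rw [h3, hDdef, Matrix.diagonal_mul_diagonal, Matrix.trace_diagonal]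
  simp [sq]

lemma vonNeumann (A B : Matrix (Fin n) (Fin n) ℝ) :
    Matrix.trace (Aᵀ * B) ≤ ∑ i, svals A i * svals B i := by
  classical
  obtain ⟨U₁, V₁, hU₁tU, hU₁Ut, hV₁tV, hV₁Vt, hA⟩ := exists_svd A
  obtain ⟨U₂, V₂, hU₂tU, hU₂Ut, hV₂tV, hV₂Vt, hB⟩ := exists_svd B
  set σ := svals A with hσdef
  set τ := svals B with hτdef
  set D₁ := Matrix.diagonal σ with hD₁def
  set D₂ := Matrix.diagonal τ with hD₂def
  set P : Matrix (Fin n) (Fin n) ℝ := U₁ᵀ * U₂ with hPdef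
  set Q : Matrix (Fin n) (Fin n) ℝ := V₁ᵀ * V₂ with hQdef
  have hPtP : Pᵀ * P = 1 := orth_conj hU₁Ut hU₂tU
  have hQtQ : Qᵀ * Q = 1 := orth_conj hV₁Vt hV₂tV
  have hPPt : P * Pᵀ = 1 := mul_eq_one_comm.mp hPtP
  have hQQt : Q * Qᵀ = 1 := mul_eq_one_comm.mp hQtQ
  -- trace formula
  have hD₁t : D₁ᵀ = D₁ := by rw [hD₁def, Matrix.diagonal_transpose]
  have hAB : Aᵀ * B = V₁ * (D₁ * (P * (D₂ * V₂ᵀ))) := by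
    rw [hA, hB]
    simp only [Matrix.transpose_mul, Matrix.transpose_transpose, hD₁t, Matrix.mul_assoc]
    rw [← Matrix.mul_assoc U₁ᵀ U₂, ← hPdef]
  have hQt : V₂ᵀ * V₁ = Qᵀ := by
    rw [hQdef, Matrix.transpose_mul, Matrix.transpose_transpose]
  have htr : Matrix.trace (Aᵀ * B) = ∑ i, ∑ j, σ i * τ j * (P i j * Q i j) := by
    rw [hAB, Matrix.trace_mul_comm]
    have h4 : D₁ * (P * (D₂ * V₂ᵀ)) * V₁ = D₁ * (P * (D₂ * Qᵀ)) := by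
      calc D₁ * (P * (D₂ * V₂ᵀ)) * V₁ = D₁ * (P * (D₂ * (V₂ᵀ * V₁))) := by
            simp only [Matrix.mul_assoc]
        _ = D₁ * (P * (D₂ * Qᵀ)) := by rw [hQt]
    rw [h4, Matrix.trace]
    congr 1
    funext i
    rw [Matrix.diag_apply, hD₁def, Matrix.diagonal_mul, Matrix.mul_apply, Finset.mul_sum]
    congr 1
    funext j
    rw [hD₂def, Matrix.diagonal_mul, Matrix.transpose_apply]
    ring
  rw [htr]
  -- row and column sums of squares
  have hProw : ∀ i, ∑ j, P i j ^ 2 = 1 := by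
    intro i
    have : (P * Pᵀ) i i = ∑ j, P i j ^ 2 := by
      simp [Matrix.mul_apply, sq]
    rw [hPPt] at this
    simpa using this.symm
  have hQrow : ∀ i, ∑ j, Q i j ^ 2 = 1 := by
    intro i
    have : (Q * Qᵀ) i i = ∑ j, Q i j ^ 2 := by
      simp [Matrix.mul_apply, sq]
    rw [hQQt] at this
    simpa using this.symm
  have hPcol : ∀ j, ∑ i, P i j ^ 2 = 1 := by
    intro j
    have : (Pᵀ * P) j j = ∑ i, P i j ^ 2 := by
      simp [Matrix.mul_apply, sq]
    rw [hPtP] at this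
    simpa using this.symm
  have hQcol : ∀ j, ∑ i, Q i j ^ 2 = 1 := by
    intro j
    have : (Qᵀ * Q) j j = ∑ i, Q i j ^ 2 := by
      simp [Matrix.mul_apply, sq]
    rw [hQtQ] at this
    simpa using this.symm
  set C : Matrix (Fin n) (Fin n) ℝ := Matrix.of (fun i j => (P i j ^ 2 + Q i j ^ 2) / 2)
    with hCdef
  have hC : C ∈ doublyStochastic ℝ (Fin n) := by
    rw [mem_doublyStochastic_iff_sum]
    refine ⟨fun i j => ?_, fun i => ?_, fun j => ?_⟩
    · simp only [hCdef, Matrix.of_apply]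
      positivity
    · simp only [hCdef, Matrix.of_apply]
      rw [← Finset.sum_div, Finset.sum_add_distrib, hProw, hQrow]
      norm_num
    · simp only [hCdef, Matrix.of_apply]
      rw [← Finset.sum_div, Finset.sum_add_distrib, hPcol, hQcol]
      norm_num
  have step1 : ∑ i, ∑ j, σ i * τ j * (P i j * Q i j) ≤ ∑ i, ∑ j, σ i * τ j * C i j := by
    refine Finset.sum_le_sum fun i _ => Finset.sum_le_sum fun j _ => ?_
    have hστ : 0 ≤ σ i * τ j := mul_nonneg (svals_nonneg A i) (svals_nonneg B j)
    have : P i j * Q i j ≤ C i j := by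
      simp only [hCdef, Matrix.of_apply]
      nlinarith [sq_nonneg (P i j - Q i j)]
    exact mul_le_mul_of_nonneg_left this hστ
  obtain ⟨w, hw0, hw1, hweq⟩ := exists_eq_sum_perm_of_mem_doublyStochastic hC
  have hmono : Monovary σ τ := (svals_antitone A).monovary (svals_antitone B)
  have hCentry : ∀ i j, C i j = ∑ π : Equiv.Perm (Fin n), w π * (π.permMatrix ℝ) i j := by
    intro i j
    have := congrFun (congrFun (congrArg (fun M => (M : Matrix (Fin n) (Fin n) ℝ)) hweq) i) j
    simpa [Matrix.sum_apply] using this.symm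
  have h5 : ∀ i j, σ i * τ j * C i j
      = ∑ π : Equiv.Perm (Fin n), w π * (σ i * (τ j * (π.permMatrix ℝ) i j)) := by
    intro i j
    rw [hCentry, Finset.mul_sum]
    refine Finset.sum_congr rfl fun π _ => ?_
    ring
  have h6 : ∑ i, ∑ j, σ i * τ j * C i j
      = ∑ i, ∑ π : Equiv.Perm (Fin n), ∑ j, w π * (σ i * (τ j * (π.permMatrix ℝ) i j)) := by
    refine Finset.sum_congr rfl fun i _ => ?_
    simp_rw [h5]
    rw [Finset.sum_comm]
  have step2 : ∑ i, ∑ j, σ i * τ j * C i j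
      = ∑ π : Equiv.Perm (Fin n), w π * ∑ i, σ i * τ (π i) := by
    rw [h6, Finset.sum_comm]
    refine Finset.sum_congr rfl fun π _ => ?_
    rw [Finset.mul_sum]
    refine Finset.sum_congr rfl fun i _ => ?_
    simp [Equiv.Perm.permMatrix, PEquiv.toMatrix_apply, Equiv.toPEquiv_apply, mul_ite,
      Finset.sum_ite_eq']
  have step3 : ∑ π : Equiv.Perm (Fin n), w π * ∑ i, σ i * τ (π i)
      ≤ ∑ π : Equiv.Perm (Fin n), w π * ∑ i, σ i * τ i := by
    refine Finset.sum_le_sum fun π _ => ?_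
    exact mul_le_mul_of_nonneg_left (hmono.sum_mul_comp_perm_le_sum_mul) (hw0 π)
  have step4 : ∑ π : Equiv.Perm (Fin n), w π * ∑ i, σ i * τ i = ∑ i, σ i * τ i := by
    rw [← Finset.sum_mul, hw1, one_mul]
  calc ∑ i, ∑ j, σ i * τ j * (P i j * Q i j) ≤ ∑ i, ∑ j, σ i * τ j * C i j := step1
    _ = ∑ π : Equiv.Perm (Fin n), w π * ∑ i, σ i * τ (π i) := step2
    _ ≤ ∑ π : Equiv.Perm (Fin n), w π * ∑ i, σ i * τ i := step3
    _ = ∑ i, σ i * τ i := step4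


lemma ip_trace (X Z : Matrix (Fin n) (Fin n) ℝ) :
    ∑ i, ∑ j, X i j * Z i j = Matrix.trace (Xᵀ * Z) := by
  rw [Matrix.trace, Finset.sum_comm]
  refine Finset.sum_congr rfl fun j _ => ?_
  simp [Matrix.mul_apply, Matrix.diag]

lemma trace_conj_diag (U V : Matrix (Fin n) (Fin n) ℝ) (hU : Uᵀ * U = 1) (hV : Vᵀ * V = 1)
    (d e : Fin n → ℝ) :
    Matrix.trace ((U * Matrix.diagonal d * Vᵀ)ᵀ * (U * Matrix.diagonal e * Vᵀ))
      = ∑ i, d i * e i := by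
  have h2 : (U * Matrix.diagonal d * Vᵀ)ᵀ * (U * Matrix.diagonal e * Vᵀ)
      = V * (Matrix.diagonal d * (Matrix.diagonal e * Vᵀ)) := by
    simp only [Matrix.transpose_mul, Matrix.transpose_transpose, Matrix.diagonal_transpose,
      Matrix.mul_assoc]
    rw [← Matrix.mul_assoc Uᵀ U, hU, Matrix.one_mul]
  rw [h2, Matrix.trace_mul_comm]
  have h3 : Matrix.diagonal d * (Matrix.diagonal e * Vᵀ) * V
      = Matrix.diagonal d * Matrix.diagonal e := by
    calc Matrix.diagonal d * (Matrix.diagonal e * Vᵀ) * V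
        = Matrix.diagonal d * (Matrix.diagonal e * (Vᵀ * V)) := by simp only [Matrix.mul_assoc]
      _ = _ := by rw [hV, Matrix.mul_one]
  rw [h3, Matrix.diagonal_mul_diagonal, Matrix.trace_diagonal]

lemma keyA (c : ℝ) (X Z : Matrix (Fin n) (Fin n) ℝ) (hZ : ∀ i, c ≤ svals Z i) :
    (∑ i, ∑ j, X i j * Z i j) - (1/2) * ∑ i, ∑ j, (Z i j)^2
      ≤ (1/2) * ∑ i, ∑ j, (X i j)^2 - (1/2) * ∑ i, (max (c - svals X i) 0)^2 := by
  have h1 := vonNeumann X Z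
  rw [← ip_trace] at h1
  rw [← sum_sq_svals X, ← sum_sq_svals Z]
  have h2 : ∀ i, svals X i * svals Z i - (1/2) * (svals Z i)^2
      ≤ (1/2) * (svals X i)^2 - (1/2) * (max (c - svals X i) 0)^2 := by
    intro i
    have hσ := svals_nonneg X i
    have hτ := hZ i
    rcases le_or_gt c (svals X i) with hcase | hcase
    · rw [max_eq_right (by linarith)]
      nlinarith [sq_nonneg (svals X i - svals Z i)]
    · rw [max_eq_left (by linarith)]
      nlinarith [sq_nonneg (svals X i - svals Z i), mul_nonneg (sub_nonneg.2 hτ)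
        (sub_nonneg.2 hτ)]
  have h3 := Finset.sum_le_sum (fun i (_ : i ∈ Finset.univ) => h2 i)
  rw [Finset.sum_sub_distrib, Finset.sum_sub_distrib, ← Finset.mul_sum, ← Finset.mul_sum,
    ← Finset.mul_sum] at h3
  linarith

lemma keyB (c : ℝ) (hc : 0 < c) (X : Matrix (Fin n) (Fin n) ℝ) :
    ∃ Z : Matrix (Fin n) (Fin n) ℝ, (∀ i, c ≤ svals Z i) ∧
      (∑ i, ∑ j, X i j * Z i j) - (1/2) * ∑ i, ∑ j, (Z i j)^2
        = (1/2) * ∑ i, ∑ j, (X i j)^2 - (1/2) * ∑ i, (max (c - svals X i) 0)^2 := by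
  obtain ⟨U, V, hUtU, hUUt, hVtV, hVVt, hX⟩ := exists_svd X
  set σ := svals X with hσdef
  set m : Fin n → ℝ := fun i => max (σ i) c with hmdef
  have hmc : ∀ i, c ≤ m i := fun i => le_max_right _ _
  have hmσ : ∀ i, 0 ≤ m i := fun i => le_trans hc.le (hmc i)
  set Z : Matrix (Fin n) (Fin n) ℝ := U * Matrix.diagonal m * Vᵀ with hZdef
  -- eigenvalue lower bound for ZᵀZ
  have heig : ∀ j, c^2 ≤ (Matrix.isHermitian_conjTranspose_mul_self Z).eigenvalues j := by
    intro j
    set hH := Matrix.isHermitian_conjTranspose_mul_self Z with hHdef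
    set w : Fin n → ℝ := fun i => hH.eigenvectorBasis j i with hwdef
    have h1 : (Zᵀ * Z) *ᵥ w = hH.eigenvalues j • w := by
      have := hH.mulVec_eigenvectorBasis j
      convert this using 2
      simp [Matrix.conjTranspose_eq_transpose_of_trivial]
    have h2 : w ⬝ᵥ w = 1 := by
      have := (orthonormal_iff_ite (𝕜 := ℝ)).mp hH.eigenvectorBasis.orthonormal j j
      rw [einner] at this
      simpa [hwdef] using this
    have h3 : (Z *ᵥ w) ⬝ᵥ (Z *ᵥ w) = hH.eigenvalues j := by
      rw [dot_mulVec_self, h1, dotProduct_smul, h2, smul_eq_mul, mul_one]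
    set y : Fin n → ℝ := Vᵀ *ᵥ w with hydef
    have hy : y ⬝ᵥ y = 1 := by
      rw [hydef, dot_mulVec_self, Matrix.transpose_transpose, hVVt, Matrix.one_mulVec, h2]
    have h4 : Z *ᵥ w = U *ᵥ (Matrix.diagonal m *ᵥ y) := by
      rw [hZdef, hydef, ← Matrix.mulVec_mulVec, ← Matrix.mulVec_mulVec]
    have h5 : (Z *ᵥ w) ⬝ᵥ (Z *ᵥ w) = ∑ k, (m k)^2 * (y k)^2 := by
      rw [h4, dot_mulVec_self, hUtU, Matrix.one_mulVec, dotProduct]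
      refine Finset.sum_congr rfl fun k _ => ?_
      simp only [Matrix.mulVec_diagonal]
      ring
    have h6 : c^2 * (y ⬝ᵥ y) ≤ ∑ k, (m k)^2 * (y k)^2 := by
      rw [dotProduct, Finset.mul_sum]
      refine Finset.sum_le_sum fun k _ => ?_
      have : c^2 ≤ (m k)^2 := by nlinarith [hmc k, hc.le]
      nlinarith [sq_nonneg (y k)]
    rw [hy, mul_one] at h6
    rw [← h3, h5]
    exact h6
  have hZsv : ∀ i, c ≤ svals Z i := by
    obtain ⟨ρ, hρ⟩ := svals_exists_perm Z
    intro i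
    rw [hρ]
    calc c = Real.sqrt (c^2) := by rw [Real.sqrt_sq hc.le]
      _ ≤ _ := Real.sqrt_le_sqrt (heig (ρ i))
  refine ⟨Z, hZsv, ?_⟩
  have hip : ∑ i, ∑ j, X i j * Z i j = ∑ i, σ i * m i := by
    rw [ip_trace, hX, hZdef, trace_conj_diag U V hUtU hVtV]
  have hZ2 : ∑ i, ∑ j, (Z i j)^2 = ∑ i, (m i)^2 := by
    have := trace_conj_diag U V hUtU hVtV m m
    rw [← hZdef] at this
    rw [← ip_trace] at this
    calc ∑ i, ∑ j, (Z i j)^2 = ∑ i, ∑ j, Z i j * Z i j := by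
          refine Finset.sum_congr rfl fun i _ => Finset.sum_congr rfl fun j _ => by ring
      _ = ∑ i, m i * m i := this
      _ = ∑ i, (m i)^2 := Finset.sum_congr rfl fun i _ => by ring
  have hX2 : ∑ i, ∑ j, (X i j)^2 = ∑ i, (σ i)^2 := (sum_sq_svals X).symm
  rw [hip, hZ2, hX2]
  have hpt : ∀ i, σ i * m i - (1/2) * (m i)^2
      = (1/2) * (σ i)^2 - (1/2) * (max (c - σ i) 0)^2 := by
    intro i
    rcases le_or_gt c (σ i) with hcase | hcase
    · rw [hmdef]
      simp only
      rw [max_eq_left hcase, max_eq_right (by linarith)]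
      ring
    · rw [hmdef]
      simp only
      rw [max_eq_right hcase.le, max_eq_left (by linarith)]
      ring
  calc (∑ i, σ i * m i) - (1/2) * ∑ i, (m i)^2
      = ∑ i, (σ i * m i - (1/2) * (m i)^2) := by
        rw [Finset.sum_sub_distrib, ← Finset.mul_sum]
    _ = ∑ i, ((1/2) * (σ i)^2 - (1/2) * (max (c - σ i) 0)^2) := by
        exact Finset.sum_congr rfl fun i _ => hpt i
    _ = (1/2) * (∑ i, (σ i)^2) - (1/2) * ∑ i, (max (c - σ i) 0)^2 := by
        rw [Finset.sum_sub_distrib, ← Finset.mul_sum, ← Finset.mul_sum]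

end SvalsAux

theorem stmt_18 (n : ℕ) (lam a : ℝ) (hlam : 0 < lam) (ha : 0 < a) (h : a < 1 / lam)
    (φ : ℝ → ℝ)
    (hφ : ∀ x, φ x = if |x| ≤ 1 / a then |x| - a / 2 * x ^ 2 else 1 / (2 * a))
    (Y : Matrix (Fin n) (Fin n) ℝ) :
    StrictConvexOn ℝ Set.univ
      (fun X : Matrix (Fin n) (Fin n) ℝ =>
        (1 / 2) * (∑ i, ∑ j, (Y i j - X i j) ^ 2) + lam * ∑ i, φ (svals X i)) := by
  classical
  have hc : (0:ℝ) < 1/a := by positivity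
  have hla1 : lam * a < 1 := by
    have h2 := mul_lt_mul_of_pos_left h hlam
    rwa [mul_one_div, div_self (ne_of_gt hlam)] at h2
  have hla0 : 0 < lam * a := mul_pos hlam ha
  have hphi : ∀ x : ℝ, 0 ≤ x →
      lam * φ x = lam/(2*a) - (lam*a/2) * (max (1/a - x) 0)^2 := by
    intro x hx
    rw [hφ x, abs_of_nonneg hx]
    rcases le_or_gt x (1/a) with hc1 | hc1
    · rw [if_pos hc1, max_eq_left (by linarith)]
      field_simp
      ring
    · rw [if_neg (not_le.2 hc1), max_eq_right (by linarith)]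
      ring
  have hrep : ∀ M : Matrix (Fin n) (Fin n) ℝ,
      (1 / 2) * (∑ i, ∑ j, (Y i j - M i j) ^ 2) + lam * ∑ i, φ (svals M i)
      = ((1/2) * (∑ i, ∑ j, (Y i j)^2) + n * (lam/(2*a)))
        - (∑ i, ∑ j, Y i j * M i j)
        + (1 - lam*a) * ((1/2) * ∑ i, ∑ j, (M i j)^2)
        + (lam*a) * ((1/2) * (∑ i, ∑ j, (M i j)^2)
            - (1/2) * ∑ i, (max (1/a - svals M i) 0)^2) := by
    intro M
    have e1 : ∑ i, ∑ j, (Y i j - M i j)^2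
        = (∑ i, ∑ j, (Y i j)^2) - 2 * (∑ i, ∑ j, Y i j * M i j) + ∑ i, ∑ j, (M i j)^2 := by
      calc ∑ i, ∑ j, (Y i j - M i j)^2
          = ∑ i, ∑ j, ((Y i j)^2 - 2*(Y i j * M i j) + (M i j)^2) :=
            Finset.sum_congr rfl fun i _ => Finset.sum_congr rfl fun j _ => by ring
        _ = _ := by
            simp only [Finset.sum_add_distrib, Finset.sum_sub_distrib, ← Finset.mul_sum]
    have e2 : lam * ∑ i, φ (svals M i)
        = n * (lam/(2*a)) - (lam*a/2) * ∑ i, (max (1/a - svals M i) 0)^2 := by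
      rw [Finset.mul_sum]
      calc ∑ i, lam * φ (svals M i)
          = ∑ i, (lam/(2*a) - (lam*a/2) * (max (1/a - svals M i) 0)^2) :=
            Finset.sum_congr rfl fun i _ => hphi _ (SvalsAux.svals_nonneg M i)
        _ = _ := by
            rw [Finset.sum_sub_distrib, ← Finset.mul_sum, Finset.sum_const, Finset.card_univ,
              Fintype.card_fin, nsmul_eq_mul]
    rw [e1, e2]
    ring
  refine ⟨convex_univ, fun X _ Z _ hne p q hp hq hpq => ?_⟩
  simp only [smul_eq_mul]
  set W : Matrix (Fin n) (Fin n) ℝ := p • X + q • Z with hWdef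
  have hWapp : ∀ i j, W i j = p * X i j + q * Z i j := by
    intro i j
    simp [hWdef, Matrix.add_apply, Matrix.smul_apply]
  show (1 / 2) * (∑ i, ∑ j, (Y i j - W i j) ^ 2) + lam * ∑ i, φ (svals W i)
      < p * ((1 / 2) * (∑ i, ∑ j, (Y i j - X i j) ^ 2) + lam * ∑ i, φ (svals X i))
        + q * ((1 / 2) * (∑ i, ∑ j, (Y i j - Z i j) ^ 2) + lam * ∑ i, φ (svals Z i))
  rw [hrep X, hrep Z, hrep W]
  -- linear part
  have lin1 : ∑ i, ∑ j, Y i j * W i j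
      = p * (∑ i, ∑ j, Y i j * X i j) + q * (∑ i, ∑ j, Y i j * Z i j) := by
    calc ∑ i, ∑ j, Y i j * W i j
        = ∑ i, ∑ j, (p * (Y i j * X i j) + q * (Y i j * Z i j)) :=
          Finset.sum_congr rfl fun i _ => Finset.sum_congr rfl fun j _ => by
            rw [hWapp]; ring
      _ = _ := by
          simp only [Finset.sum_add_distrib, ← Finset.mul_sum]
  -- quadratic part
  have sq1 : (∑ i, ∑ j, (W i j)^2) + p*q*(∑ i, ∑ j, (X i j - Z i j)^2)
      = p * (∑ i, ∑ j, (X i j)^2) + q * (∑ i, ∑ j, (Z i j)^2) := by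
    have hq1 : q = 1 - p := by linarith
    calc (∑ i, ∑ j, (W i j)^2) + p*q*(∑ i, ∑ j, (X i j - Z i j)^2)
        = ∑ i, ∑ j, ((W i j)^2 + p*q*(X i j - Z i j)^2) := by
          simp only [Finset.mul_sum, Finset.sum_add_distrib]
      _ = ∑ i, ∑ j, (p * (X i j)^2 + q * (Z i j)^2) :=
          Finset.sum_congr rfl fun i _ => Finset.sum_congr rfl fun j _ => by
            rw [hWapp, hq1]; ring
      _ = _ := by
          simp only [Finset.sum_add_distrib, ← Finset.mul_sum]
  have pos1 : 0 < ∑ i, ∑ j, (X i j - Z i j)^2 := by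
    have hne2 : ∃ i j, X i j ≠ Z i j := by
      by_contra hcon
      push_neg at hcon
      exact hne (Matrix.ext fun i j => hcon i j)
    obtain ⟨i0, j0, hij⟩ := hne2
    refine Finset.sum_pos' (fun i _ => Finset.sum_nonneg fun j _ => sq_nonneg _)
      ⟨i0, Finset.mem_univ _, ?_⟩
    refine Finset.sum_pos' (fun j _ => sq_nonneg _) ⟨j0, Finset.mem_univ _, ?_⟩
    exact lt_of_le_of_ne (sq_nonneg _) (Ne.symm (pow_ne_zero 2 (sub_ne_zero.2 hij)))
  -- concave (singular value) part
  obtain ⟨Z₀, hZ₀1, hZ₀2⟩ := SvalsAux.keyB (1/a) hc W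
  have hA1 := SvalsAux.keyA (1/a) X Z₀ hZ₀1
  have hA2 := SvalsAux.keyA (1/a) Z Z₀ hZ₀1
  have lin2 : ∑ i, ∑ j, W i j * Z₀ i j
      = p * (∑ i, ∑ j, X i j * Z₀ i j) + q * (∑ i, ∑ j, Z i j * Z₀ i j) := by
    calc ∑ i, ∑ j, W i j * Z₀ i j
        = ∑ i, ∑ j, (p * (X i j * Z₀ i j) + q * (Z i j * Z₀ i j)) :=
          Finset.sum_congr rfl fun i _ => Finset.sum_congr rfl fun j _ => by
            rw [hWapp]; ring
      _ = _ := by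
          simp only [Finset.sum_add_distrib, ← Finset.mul_sum]
  have hFX := mul_le_mul_of_nonneg_left hA1 hp.le
  have hFZ := mul_le_mul_of_nonneg_left hA2 hq.le
  set d : ℝ := (1/2) * ∑ i, ∑ j, (Z₀ i j)^2 with hddef
  have hFconv : (1/2) * (∑ i, ∑ j, (W i j)^2) - (1/2) * ∑ i, (max (1/a - svals W i) 0)^2
      ≤ p * ((1/2) * (∑ i, ∑ j, (X i j)^2) - (1/2) * ∑ i, (max (1/a - svals X i) 0)^2)
        + q * ((1/2) * (∑ i, ∑ j, (Z i j)^2) - (1/2) * ∑ i, (max (1/a - svals Z i) 0)^2) := by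
    have e3 : (1/2) * (∑ i, ∑ j, (W i j)^2) - (1/2) * ∑ i, (max (1/a - svals W i) 0)^2
        = p * ((∑ i, ∑ j, X i j * Z₀ i j) - d) + q * ((∑ i, ∑ j, Z i j * Z₀ i j) - d) := by
      rw [← hZ₀2, lin2, hddef]
      linear_combination ((1/2) * ∑ i, ∑ j, (Z₀ i j)^2) * hpq
    rw [e3]
    exact add_le_add hFX hFZ
  set S := ∑ i, ∑ j, (X i j - Z i j)^2 with hSdef
  set q2X := ∑ i, ∑ j, (X i j)^2 with hq2X
  set q2Z := ∑ i, ∑ j, (Z i j)^2 with hq2Z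
  set q2W := ∑ i, ∑ j, (W i j)^2 with hq2W
  set gX := ∑ i, (max (1/a - svals X i) 0)^2 with hgX
  set gZ := ∑ i, (max (1/a - svals Z i) 0)^2 with hgZ
  set gW := ∑ i, (max (1/a - svals W i) 0)^2 with hgW
  set iYX := ∑ i, ∑ j, Y i j * X i j with hiYX
  set iYZ := ∑ i, ∑ j, Y i j * Z i j with hiYZ
  set iYW := ∑ i, ∑ j, Y i j * W i j with hiYW
  set K : ℝ := (1/2) * (∑ i, ∑ j, (Y i j)^2) + n * (lam/(2*a)) with hK
  clear_value S q2X q2Z q2W gX gZ gW iYX iYZ iYW K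
  have t1 : 0 < (1 - lam*a) * (p * ((1/2) * q2X) + q * ((1/2) * q2Z) - (1/2) * q2W) := by
    have e4 : p * ((1/2) * q2X) + q * ((1/2) * q2Z) - (1/2) * q2W = (1/2) * (p * q * S) := by
      linear_combination (-1/2 : ℝ) * sq1
    rw [e4]
    have h5 : 0 < p * q * S := mul_pos (mul_pos hp hq) pos1
    have h6 : 0 < 1 - lam*a := by linarith
    positivity
  have t2 : 0 ≤ (lam*a) * (p * ((1/2) * q2X - (1/2) * gX) + q * ((1/2) * q2Z - (1/2) * gZ)
      - ((1/2) * q2W - (1/2) * gW)) :=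
    mul_nonneg hla0.le (sub_nonneg.2 hFconv)
  have final_eq : (p * (K - iYX + (1 - lam*a) * ((1/2) * q2X)
        + (lam*a) * ((1/2) * q2X - (1/2) * gX))
      + q * (K - iYZ + (1 - lam*a) * ((1/2) * q2Z)
        + (lam*a) * ((1/2) * q2Z - (1/2) * gZ)))
      - (K - iYW + (1 - lam*a) * ((1/2) * q2W)
        + (lam*a) * ((1/2) * q2W - (1/2) * gW))
      = (1 - lam*a) * (p * ((1/2) * q2X) + q * ((1/2) * q2Z) - (1/2) * q2W)
        + (lam*a) * (p * ((1/2) * q2X - (1/2) * gX) + q * ((1/2) * q2Z - (1/2) * gZ)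
          - ((1/2) * q2W - (1/2) * gW)) := by
    linear_combination lin1 + K * hpq
  linarith [t1, t2, final_eq]
end
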